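/- arXiv:2008.00747 — 2 statements merged into one kernel-verified Lean document; each statement's English description precedes it below -/
import Mathlib

section
/- Let d ≥ 1 and let k : ℝ^d × ℝ^d → ℝ be measurable and integrally strictly positive definite, i.e. for every measurable h : ℝ^d → ℝ with 0 < ∫ h(x)² dx < ∞ and with (x,x') ↦ h(x)k(x,x')h(x') integrable on ℝ^d × ℝ^d, one has ∫∫ h(x)k(x,x')h(x') dx dx' > 0. Let p and p₀ be continuously differentiable, everywhere strictly positive probability density functions on ℝ^d, and set δ(x) = ∇log p₀(x) − ∇log p(x). Assume each component of x ↦ p(x)δᵢ(x) is square-integrable and that for all indices i the function (x,x') ↦ p(x)δᵢ(x) k(x,x') δᵢ(x') p(x') is integrable on ℝ^d × ℝ^d. Define the kernelized Stein discrepancy S(p,p₀) = ∫∫ p(x) δ(x)ᵀ k(x,x') δ(x') p(x') dx dx'. Then S(p,p₀) ≥ 0, and S(p,p₀) = 0 if and only if p = p₀. -/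
open MeasureTheory

/-- Nonnegativity and discriminating power of the kernelized Stein discrepancy. -/
theorem stmt_0 (d : ℕ) (hd : 1 ≤ d)
    (k : EuclideanSpace ℝ (Fin d) × EuclideanSpace ℝ (Fin d) → ℝ)
    (hk_meas : Measurable k)
    (hk_ispd : ∀ h : EuclideanSpace ℝ (Fin d) → ℝ, Measurable h →
      Integrable (fun x => (h x) ^ 2) → (0 < ∫ x, (h x) ^ 2) →
      Integrable (fun z : EuclideanSpace ℝ (Fin d) × EuclideanSpace ℝ (Fin d) =>
        h z.1 * k z * h z.2) →
      0 < ∫ z : EuclideanSpace ℝ (Fin d) × EuclideanSpace ℝ (Fin d), h z.1 * k z * h z.2)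
    (p p₀ : EuclideanSpace ℝ (Fin d) → ℝ)
    (hp_smooth : ContDiff ℝ 1 p) (hp₀_smooth : ContDiff ℝ 1 p₀)
    (hp_pos : ∀ x, 0 < p x) (hp₀_pos : ∀ x, 0 < p₀ x)
    (hp_prob : ∫ x, p x = 1) (hp₀_prob : ∫ x, p₀ x = 1)
    (δ : EuclideanSpace ℝ (Fin d) → EuclideanSpace ℝ (Fin d))
    (hδ : ∀ x, δ x = gradient (fun y => Real.log (p₀ y)) x
        - gradient (fun y => Real.log (p y)) x)
    (hδ_sq : ∀ i : Fin d, Integrable (fun x => (p x * δ x i) ^ 2))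
    (hδ_int : ∀ i : Fin d,
      Integrable (fun z : EuclideanSpace ℝ (Fin d) × EuclideanSpace ℝ (Fin d) =>
        (p z.1 * δ z.1 i) * k z * (δ z.2 i * p z.2)))
    (S : ℝ)
    (hS : S = ∫ z : EuclideanSpace ℝ (Fin d) × EuclideanSpace ℝ (Fin d),
        p z.1 * (∑ i : Fin d, δ z.1 i * δ z.2 i) * k z * p z.2) :
    0 ≤ S ∧ (S = 0 ↔ p = p₀) := by
  classical
  have hlp : ContDiff ℝ 1 (fun y => Real.log (p y)) :=
    hp_smooth.log (fun x => (hp_pos x).ne')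
  have hlp₀ : ContDiff ℝ 1 (fun y => Real.log (p₀ y)) :=
    hp₀_smooth.log (fun x => (hp₀_pos x).ne')
  have hgrad_cont : ∀ f : EuclideanSpace ℝ (Fin d) → ℝ, ContDiff ℝ 1 f →
      Continuous (gradient f) := fun f hf =>
    (InnerProductSpace.toDual ℝ _).symm.continuous.comp (hf.continuous_fderiv one_ne_zero)
  have hδ_cont : Continuous δ := by
    have : Continuous fun x => gradient (fun y => Real.log (p₀ y)) x
        - gradient (fun y => Real.log (p y)) x :=
      (hgrad_cont _ hlp₀).sub (hgrad_cont _ hlp)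
    exact this.congr fun x => (hδ x).symm
  -- the component functions
  set h : Fin d → EuclideanSpace ℝ (Fin d) → ℝ := fun i x => p x * δ x i with hh
  have hh_cont : ∀ i, Continuous (h i) := fun i =>
    hp_smooth.continuous.mul ((continuous_apply i).comp ((PiLp.continuous_ofLp (p := 2) (β := fun _ : Fin d => ℝ)).comp hδ_cont))
  have hh_meas : ∀ i, Measurable (h i) := fun i => (hh_cont i).measurable
  -- the per-component integrand
  set F : Fin d → EuclideanSpace ℝ (Fin d) × EuclideanSpace ℝ (Fin d) → ℝ :=
    fun i z => (p z.1 * δ z.1 i) * k z * (δ z.2 i * p z.2) with hF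
  -- key dichotomy
  have key : ∀ i : Fin d, (0 < ∫ z, F i z) ∨ ((h i =ᵐ[volume] 0) ∧ ∫ z, F i z = 0) := by
    intro i
    rcases (integral_nonneg (f := fun x => (p x * δ x i) ^ 2) (fun x => sq_nonneg (p x * δ x i))).lt_or_eq with hpos | hzero
    · left
      have hint : Integrable (fun z : EuclideanSpace ℝ (Fin d) × EuclideanSpace ℝ (Fin d) =>
          h i z.1 * k z * h i z.2) :=
        (hδ_int i).congr (Filter.Eventually.of_forall fun z => by simp only [hF, hh]; ring)
      have := hk_ispd (h i) (hh_meas i) (hδ_sq i) hpos hint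
      calc (0:ℝ) < ∫ z, h i z.1 * k z * h i z.2 := this
        _ = ∫ z, F i z := integral_congr_ae (Filter.Eventually.of_forall fun z => by
              simp only [hF, hh]; ring)
    · right
      have hsq0 : (fun x => (p x * δ x i) ^ 2) =ᵐ[volume] 0 :=
        (integral_eq_zero_iff_of_nonneg (fun x => sq_nonneg _) (hδ_sq i)).mp hzero.symm
      have hae : h i =ᵐ[volume] 0 := by
        filter_upwards [hsq0] with x hx
        exact pow_eq_zero_iff two_ne_zero |>.mp hx
      refine ⟨hae, ?_⟩
      have hfst : (fun z : EuclideanSpace ℝ (Fin d) × EuclideanSpace ℝ (Fin d) => h i z.1)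
          =ᵐ[volume] 0 := by
        rw [MeasureTheory.Measure.volume_eq_prod]
        exact MeasureTheory.Measure.quasiMeasurePreserving_fst.ae_eq_comp hae
      have : F i =ᵐ[volume] 0 := by
        filter_upwards [hfst] with z hz
        have hz' : p z.1 * δ z.1 i = 0 := hz
        simp [hF, hz']
      calc (∫ z, F i z) = ∫ z : EuclideanSpace ℝ (Fin d) × EuclideanSpace ℝ (Fin d), (0:ℝ) :=
            integral_congr_ae this
        _ = 0 := integral_zero _ _
  -- decomposition of S
  have hS' : S = ∑ i : Fin d, ∫ z, F i z := by
    rw [hS, ← integral_finset_sum _ (fun i _ => hδ_int i)]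
    refine integral_congr_ae (Filter.Eventually.of_forall fun z => ?_)
    simp only [Finset.mul_sum, Finset.sum_mul]
    exact Finset.sum_congr rfl fun i _ => by ring
  have hterm_nonneg : ∀ i : Fin d, 0 ≤ ∫ z, F i z := by
    intro i
    rcases key i with hpos | ⟨_, hz⟩
    · exact hpos.le
    · exact hz.ge
  have hS_nonneg : 0 ≤ S := hS' ▸ Finset.sum_nonneg fun i _ => hterm_nonneg i
  refine ⟨hS_nonneg, ?_, ?_⟩
  · -- S = 0 → p = p₀
    intro hS0
    have hterm0 : ∀ i : Fin d, ∫ z, F i z = 0 := by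
      intro i
      have := (Finset.sum_eq_zero_iff_of_nonneg (fun i _ => hterm_nonneg i)).mp
        (hS' ▸ hS0 : ∑ i : Fin d, ∫ z, F i z = 0)
      exact this i (Finset.mem_univ i)
    have hae : ∀ i : Fin d, h i =ᵐ[volume] 0 := by
      intro i
      rcases key i with hpos | ⟨hae, _⟩
      · exact absurd (hterm0 i) hpos.ne'
      · exact hae
    have hδi0 : ∀ i : Fin d, ∀ x, δ x i = 0 := by
      intro i
      have hcomp : (fun x => δ x i) =ᵐ[volume] 0 := by
        filter_upwards [hae i] with x hx
        have hx' : p x * δ x i = 0 := hx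
        have := mul_eq_zero.mp hx'
        rcases this with h1 | h2
        · exact absurd h1 (hp_pos x).ne'
        · exact h2
      have := (((continuous_apply i).comp ((PiLp.continuous_ofLp (p := 2) (β := fun _ : Fin d => ℝ)).comp hδ_cont)).ae_eq_iff_eq volume
        continuous_const).mp hcomp
      exact fun x => congrFun this x
    have hδ0 : ∀ x, δ x = 0 := by
      intro x
      ext i
      exact hδi0 i x
    have hgrad_eq : ∀ x, fderiv ℝ (fun y => Real.log (p y)) x
        = fderiv ℝ (fun y => Real.log (p₀ y)) x := by
      intro x
      have hg : gradient (fun y => Real.log (p₀ y)) x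
          = gradient (fun y => Real.log (p y)) x := by
        have := hδ0 x
        rw [hδ x] at this
        exact sub_eq_zero.mp this
      exact ((InnerProductSpace.toDual ℝ _).symm.injective hg).symm
    -- the difference of logs is constant
    have hdiff : Differentiable ℝ (fun x => Real.log (p x) - Real.log (p₀ x)) :=
      (hlp.differentiable one_ne_zero).sub (hlp₀.differentiable one_ne_zero)
    have hfd0 : ∀ x, fderiv ℝ (fun x => Real.log (p x) - Real.log (p₀ x)) x = 0 := by
      intro x
      rw [fderiv_fun_sub ((hlp.differentiable one_ne_zero) x) ((hlp₀.differentiable one_ne_zero) x),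
        hgrad_eq x, sub_self]
    have hconst : ∀ x, Real.log (p x) - Real.log (p₀ x)
        = Real.log (p 0) - Real.log (p₀ 0) := fun x =>
      is_const_of_fderiv_eq_zero hdiff hfd0 x 0
    set c : ℝ := Real.log (p 0) - Real.log (p₀ 0) with hc
    have hpc : ∀ x, p x = Real.exp c * p₀ x := by
      intro x
      have h1 : Real.log (p x) = c + Real.log (p₀ x) := by
        have := hconst x
        linarith
      calc p x = Real.exp (Real.log (p x)) := (Real.exp_log (hp_pos x)).symm
        _ = Real.exp c * Real.exp (Real.log (p₀ x)) := by rw [h1, Real.exp_add]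
        _ = Real.exp c * p₀ x := by rw [Real.exp_log (hp₀_pos x)]
    have hint₀ : Integrable p₀ := by
      by_contra hcon
      rw [integral_undef hcon] at hp₀_prob
      norm_num at hp₀_prob
    have hec : Real.exp c = 1 := by
      have : ∫ x, p x = ∫ x, Real.exp c * p₀ x :=
        integral_congr_ae (Filter.Eventually.of_forall hpc)
      rw [hp_prob, integral_const_mul, hp₀_prob, mul_one] at this
      exact this.symm
    funext x
    rw [hpc x, hec, one_mul]
  · -- p = p₀ → S = 0
    intro hpe
    have hδ0 : ∀ x, δ x = 0 := by
      intro x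
      rw [hδ x, hpe, sub_self]
    have hδi0 : ∀ x (i : Fin d), δ x i = 0 := by
      intro x i
      rw [hδ0 x]
      rfl
    rw [hS]
    have : ∀ z : EuclideanSpace ℝ (Fin d) × EuclideanSpace ℝ (Fin d),
        p z.1 * (∑ i : Fin d, δ z.1 i * δ z.2 i) * k z * p z.2 = 0 := by
      intro z
      simp [hδi0]
    calc (∫ z : EuclideanSpace ℝ (Fin d) × EuclideanSpace ℝ (Fin d),
          p z.1 * (∑ i : Fin d, δ z.1 i * δ z.2 i) * k z * p z.2)
        = ∫ _z : EuclideanSpace ℝ (Fin d) × EuclideanSpace ℝ (Fin d), (0:ℝ) :=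
          integral_congr_ae (Filter.Eventually.of_forall this)
      _ = 0 := integral_zero _ _
end

section
/- Let d ≥ 1 and let f, p : ℝ^d → ℝ be continuously differentiable functions such that the gradient ∇(f·p) of the product is integrable on ℝ^d (componentwise) and f(x)p(x) → 0 as ‖x‖ → ∞. Then for every coordinate i ∈ {1,…,d}, ∫_{ℝ^d} ∂ᵢ(f(x)p(x)) dx = 0; equivalently ∫_{ℝ^d} ∇(f(x)p(x)) dx = 0. -/
open MeasureTheory Filter Module

section Aux

/-- Key lemma: if `h` is `C¹`, tends to `0` at infinity, and its directional derivative in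
direction `v` is integrable, then the integral of that directional derivative vanishes. -/
lemma stein_key (d : ℕ) (hd : 1 ≤ d) (h : EuclideanSpace ℝ (Fin d) → ℝ)
    (hh : ContDiff ℝ 1 h)
    (v : EuclideanSpace ℝ (Fin d))
    (hint : Integrable (fun x => fderiv ℝ h x v))
    (hdecay : Tendsto h
      (Filter.comap (fun x : EuclideanSpace ℝ (Fin d) => ‖x‖) atTop) (nhds 0)) :
    ∫ x, fderiv ℝ h x v = 0 := by
  classical
  rcases eq_or_ne v 0 with rfl | hv
  · simp
  have hdiff : Differentiable ℝ h := hh.differentiable one_ne_zero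
  have hnt : Nontrivial (EuclideanSpace ℝ (Fin d)) := nontrivial_iff.2 ⟨v, 0, hv⟩
  obtain ⟨L, hL⟩ : ∃ L : EuclideanSpace ℝ (Fin d) ≃L[ℝ] ((Fin (d - 1) → ℝ) × ℝ),
      L v = (0, 1) := by
    have hfr : finrank ℝ ((Fin (d - 1) → ℝ) × ℝ) = finrank ℝ (EuclideanSpace ℝ (Fin d)) := by
      simp [Nat.sub_add_cancel hd]
    have L₀ : EuclideanSpace ℝ (Fin d) ≃L[ℝ] ((Fin (d - 1) → ℝ) × ℝ) :=
      (ContinuousLinearEquiv.ofFinrankEq hfr).symm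
    obtain ⟨M, hM⟩ : ∃ M : ((Fin (d - 1) → ℝ) × ℝ) ≃L[ℝ] ((Fin (d - 1) → ℝ) × ℝ),
        M (L₀ v) = (0, 1) := by
      apply SeparatingDual.exists_continuousLinearEquiv_apply_eq
      · simpa using hv
      · simp
    exact ⟨L₀.trans M, by simp [hM]⟩
  have hLv : L.symm (0, 1) = v := by
    rw [← hL]; exact L.symm_apply_apply v
  set ν : Measure ((Fin (d - 1) → ℝ) × ℝ) :=
    Measure.map L (volume : Measure (EuclideanSpace ℝ (Fin d))) with hν
  haveI : ν.IsAddHaarMeasure := L.isAddHaarMeasure_map _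
  set π : Measure ((Fin (d - 1) → ℝ) × ℝ) :=
    (volume : Measure (Fin (d - 1) → ℝ)).prod (volume : Measure ℝ) with hπ
  haveI : π.IsAddHaarMeasure := by
    rw [hπ]; infer_instance
  -- transport the integral through L
  have hmap : (volume : Measure (EuclideanSpace ℝ (Fin d))) = Measure.map L.symm ν := by
    simp [hν, Measure.map_map L.symm.continuous.measurable L.continuous.measurable]
  have hLemb : Topology.IsClosedEmbedding (L.symm : ((Fin (d - 1) → ℝ) × ℝ) → _) :=
    L.symm.toHomeomorph.isClosedEmbedding
  have L_emb : MeasurableEmbedding (L : EuclideanSpace ℝ (Fin d) → ((Fin (d - 1) → ℝ) × ℝ)) :=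
    L.toHomeomorph.measurableEmbedding
  have step1 : ∫ x, fderiv ℝ h x v =
      ∫ y, fderiv ℝ h (L.symm y) v ∂ν := by
    rw [hmap, hLemb.integral_map]
  have hintν : Integrable (fun y => fderiv ℝ h (L.symm y) v) ν := by
    rw [hν, L_emb.integrable_map_iff]
    simpa [Function.comp_def] using hint
  -- relate ν and the product measure π
  have hνπ : ν = (Measure.addHaarScalarFactor ν π) • π :=
    Measure.isAddLeftInvariant_eq_smul _ _
  have hπν : π = (Measure.addHaarScalarFactor π ν) • ν :=
    Measure.isAddLeftInvariant_eq_smul _ _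
  have hintπ : Integrable (fun y => fderiv ℝ h (L.symm y) v) π := by
    rw [hπν]; exact hintν.smul_measure_nnreal
  have step2 : ∫ y, fderiv ℝ h (L.symm y) v ∂ν =
      (Measure.addHaarScalarFactor ν π : NNReal) •
        ∫ y, fderiv ℝ h (L.symm y) v ∂π := by
    conv_lhs => rw [hνπ]
    exact integral_smul_nnreal_measure _ _
  -- slices: derivative along the line t ↦ L.symm (x, t)
  have hderiv : ∀ (x : Fin (d - 1) → ℝ) (t : ℝ),
      HasDerivAt (fun s => h (L.symm (x, s))) (fderiv ℝ h (L.symm (x, t)) v) t := by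
    intro x t
    have hline : HasDerivAt (fun s : ℝ => L.symm (x, s)) v t := by
      have h1 : HasDerivAt (fun s : ℝ => ((x, s) : (Fin (d - 1) → ℝ) × ℝ)) (0, 1) t :=
        (hasDerivAt_const t x).prodMk (hasDerivAt_id t)
      have := ((L.symm : ((Fin (d - 1) → ℝ) × ℝ) →L[ℝ]
        EuclideanSpace ℝ (Fin d)).hasFDerivAt).comp_hasDerivAt t h1
      simp [hLv] at this
      exact this
    exact ((hdiff (L.symm (x, t))).hasFDerivAt).comp_hasDerivAt t hline
  -- decay along every line
  have hnormL : (0 : ℝ) < ‖(L : EuclideanSpace ℝ (Fin d) →L[ℝ] ((Fin (d - 1) → ℝ) × ℝ))‖ := by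
    rw [norm_pos_iff]
    intro h0
    obtain ⟨w, hw⟩ := exists_ne (0 : EuclideanSpace ℝ (Fin d))
    have hw0 : L w = 0 := by
      have : (L : EuclideanSpace ℝ (Fin d) →L[ℝ] ((Fin (d - 1) → ℝ) × ℝ)) w = 0 := by
        rw [h0]; rfl
      simpa using this
    exact hw (by simpa using (L.map_eq_zero_iff).1 hw0)
  have hnorm : ∀ (x : Fin (d - 1) → ℝ) (t : ℝ),
      |t| / ‖(L : EuclideanSpace ℝ (Fin d) →L[ℝ] ((Fin (d - 1) → ℝ) × ℝ))‖
        ≤ ‖L.symm (x, t)‖ := by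
    intro x t
    rw [div_le_iff₀ hnormL]
    calc |t| = ‖((x, t) : (Fin (d - 1) → ℝ) × ℝ).2‖ := by simp
    _ ≤ ‖((x, t) : (Fin (d - 1) → ℝ) × ℝ)‖ := norm_snd_le _
    _ = ‖L (L.symm (x, t))‖ := by rw [L.apply_symm_apply]
    _ ≤ ‖(L : EuclideanSpace ℝ (Fin d) →L[ℝ] ((Fin (d - 1) → ℝ) × ℝ))‖ * ‖L.symm (x, t)‖ :=
        (L : EuclideanSpace ℝ (Fin d) →L[ℝ] ((Fin (d - 1) → ℝ) × ℝ)).le_opNorm _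
    _ = ‖L.symm (x, t)‖ * ‖(L : EuclideanSpace ℝ (Fin d) →L[ℝ] ((Fin (d - 1) → ℝ) × ℝ))‖ :=
        mul_comm _ _
  have htopnorm : ∀ x : Fin (d - 1) → ℝ,
      Tendsto (fun t : ℝ => ‖L.symm (x, t)‖) atTop atTop := fun x =>
    tendsto_atTop_mono (hnorm x) (tendsto_abs_atTop_atTop.atTop_div_const hnormL)
  have hbotnorm : ∀ x : Fin (d - 1) → ℝ,
      Tendsto (fun t : ℝ => ‖L.symm (x, t)‖) atBot atTop := fun x =>
    tendsto_atTop_mono (fun t => hnorm x t) (tendsto_abs_atBot_atTop.atTop_div_const hnormL)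
  have htop : ∀ x : Fin (d - 1) → ℝ,
      Tendsto (fun t : ℝ => h (L.symm (x, t))) atTop (nhds 0) := fun x =>
    hdecay.comp (tendsto_comap_iff.2 (htopnorm x))
  have hbot : ∀ x : Fin (d - 1) → ℝ,
      Tendsto (fun t : ℝ => h (L.symm (x, t))) atBot (nhds 0) := fun x =>
    hdecay.comp (tendsto_comap_iff.2 (hbotnorm x))
  -- Fubini
  have step3 : ∫ y, fderiv ℝ h (L.symm y) v ∂π =
      ∫ x : Fin (d - 1) → ℝ, (∫ t : ℝ, fderiv ℝ h (L.symm (x, t)) v)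
        ∂(volume : Measure (Fin (d - 1) → ℝ)) := by
    rw [hπ] at hintπ ⊢
    exact MeasureTheory.integral_prod _ hintπ
  have step4 : ∫ x : Fin (d - 1) → ℝ, (∫ t : ℝ, fderiv ℝ h (L.symm (x, t)) v)
      ∂(volume : Measure (Fin (d - 1) → ℝ)) = 0 := by
    rw [show (0 : ℝ) = ∫ _x : Fin (d - 1) → ℝ, (0 : ℝ)
      ∂(volume : Measure (Fin (d - 1) → ℝ)) by simp]
    apply integral_congr_ae
    have hintπ' : Integrable (fun y => fderiv ℝ h (L.symm y) v)
        ((volume : Measure (Fin (d - 1) → ℝ)).prod (volume : Measure ℝ)) := by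
      rw [← hπ]; exact hintπ
    filter_upwards [hintπ'.prod_right_ae] with x hx
    have := MeasureTheory.integral_of_hasDerivAt_of_tendsto
      (f := fun s => h (L.symm (x, s)))
      (f' := fun t => fderiv ℝ h (L.symm (x, t)) v)
      (hderiv x) hx (hbot x) (htop x)
    simpa using this
  rw [step1, step2, step3, step4, smul_zero]

end Aux

open MeasureTheory Filter

/-- Sufficient condition for membership in the Stein class: if f·p decays at infinity
and ∇(f·p) is integrable componentwise, then ∫ ∇(f(x)p(x)) dx = 0. -/
theorem stmt_3 (d : ℕ) (hd : 1 ≤ d)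
    (f p : EuclideanSpace ℝ (Fin d) → ℝ)
    (hf : ContDiff ℝ 1 f) (hp : ContDiff ℝ 1 p)
    (hint : ∀ i : Fin d, Integrable (fun x => gradient (fun y => f y * p y) x i))
    (hdecay : Tendsto (fun x => f x * p x)
      (comap (fun x : EuclideanSpace ℝ (Fin d) => ‖x‖) atTop) (nhds 0)) :
    (∀ i : Fin d, ∫ x, gradient (fun y => f y * p y) x i = 0) ∧
    (∫ x, gradient (fun y => f y * p y) x) = 0 := by
  classical
  set g : EuclideanSpace ℝ (Fin d) → ℝ := fun y => f y * p y with hg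
  have hgC : ContDiff ℝ 1 g := hf.mul hp
  have hcomp : ∀ (i : Fin d) (x : EuclideanSpace ℝ (Fin d)),
      gradient g x i = fderiv ℝ g x (EuclideanSpace.single i 1) := by
    intro i x
    have h1 : gradient g x i
        = (inner ℝ (gradient g x) (EuclideanSpace.single i (1 : ℝ)) : ℝ) := by
      rw [EuclideanSpace.inner_single_right]; simp
    rw [h1]
    have h2 : (inner ℝ (gradient g x) (EuclideanSpace.single i (1 : ℝ)) : ℝ)
        = (InnerProductSpace.toDual ℝ _ (gradient g x)) (EuclideanSpace.single i 1) := rfl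
    rw [h2, gradient, (InnerProductSpace.toDual ℝ _).apply_symm_apply]
  have hzero : ∀ i : Fin d, ∫ x, gradient g x i = 0 := by
    intro i
    have hint' : Integrable
        (fun x => fderiv ℝ g x (EuclideanSpace.single i 1)) := by
      have := hint i
      simpa [hcomp i] using this
    have hk := stein_key d hd g hgC (EuclideanSpace.single i 1) hint' hdecay
    calc ∫ x, gradient g x i
        = ∫ x, fderiv ℝ g x (EuclideanSpace.single i 1) := by
          apply integral_congr_ae
          filter_upwards with x using hcomp i x
      _ = 0 := hk
  refine ⟨hzero, ?_⟩
  have hrepr : ∀ x : EuclideanSpace ℝ (Fin d),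
      gradient g x = ∑ i : Fin d, (gradient g x i) • EuclideanSpace.single i (1 : ℝ) := by
    intro x
    ext j
    have hs : (∑ i : Fin d, (gradient g x i) • EuclideanSpace.single i (1 : ℝ)) j
        = ∑ i : Fin d, ((gradient g x i) • EuclideanSpace.single i (1 : ℝ)) j :=
      by rw [WithLp.ofLp_sum, Finset.sum_apply]
    rw [hs]
    simp [EuclideanSpace.single_apply]
  calc (∫ x, gradient g x)
      = ∫ x, ∑ i : Fin d, (gradient g x i) • EuclideanSpace.single i (1 : ℝ) := by
        apply integral_congr_ae
        filter_upwards with x using hrepr x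
    _ = ∑ i : Fin d, ∫ x, (gradient g x i) • EuclideanSpace.single i (1 : ℝ) := by
        apply integral_finset_sum
        intro i _
        exact (hint i).smul_const _
    _ = ∑ i : Fin d, (∫ x, gradient g x i) • EuclideanSpace.single i (1 : ℝ) := by
        refine Finset.sum_congr rfl fun i _ => ?_
        exact integral_smul_const _ _
    _ = 0 := by
        simp [hzero]
end
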